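/- For every real number x and every ρ ∈ (0,1], one has |x(e^x - 1 - x)| ≤ 2|x|^{2+ρ} e^{max(x,0)}. -/
import Mathlib


theorem abs_mul_exp_sub_one_sub_le (x ρ : ℝ) (hρ0 : 0 < ρ) (hρ1 : ρ ≤ 1) :
    |x * (Real.exp x - 1 - x)| ≤ 2 * |x| ^ (2 + ρ) * Real.exp (max x 0) := by
  rcases eq_or_ne x 0 with rfl | hx0
  · simp [Real.rpow_nonneg]
  have hx : 0 < |x| := abs_pos.mpr hx0
  have hexp1 : (1:ℝ) ≤ Real.exp (max x 0) := Real.one_le_exp (le_max_right x 0)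
  have hrnn : 0 ≤ |x| ^ (2 + ρ) := Real.rpow_nonneg (abs_nonneg x) _
  rcases le_or_gt (|x|) 1 with h1 | h1
  · have h2 := Real.abs_exp_sub_one_sub_id_le h1
    have key : |x * (Real.exp x - 1 - x)| ≤ |x| ^ (2 + ρ) := by
      calc |x * (Real.exp x - 1 - x)| = |x| * |Real.exp x - 1 - x| := abs_mul _ _
        _ ≤ |x| * x ^ 2 := mul_le_mul_of_nonneg_left h2 (abs_nonneg x)
        _ = |x| ^ ((3:ℕ):ℝ) := by rw [Real.rpow_natCast, ← sq_abs x]; ring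
        _ ≤ |x| ^ (2 + ρ) := by
            apply Real.rpow_le_rpow_of_exponent_ge hx h1
            push_cast; linarith
    nlinarith [key, hrnn, hexp1]
  · have h2 : |x| ^ (2:ℝ) ≤ |x| ^ (2 + ρ) :=
      Real.rpow_le_rpow_of_exponent_le h1.le (by linarith)
    have h2' : |x| ^ 2 ≤ |x| ^ (2 + ρ) := by
      rw [← Real.rpow_two]; exact h2
    have key : |Real.exp x - 1 - x| ≤ 2 * |x| * Real.exp (max x 0) := by
      rcases le_or_gt 0 x with hx0' | hx0'
      · have hmax : max x 0 = x := max_eq_left hx0'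
        rw [hmax, abs_of_nonneg hx0']
        have hlb : 0 ≤ Real.exp x - 1 - x := by
          have := Real.add_one_le_exp x; linarith
        rw [abs_of_nonneg hlb]
        have h3 : -x + 1 ≤ Real.exp (-x) := Real.add_one_le_exp (-x)
        have h4 : Real.exp x * Real.exp (-x) = 1 := by
          rw [← Real.exp_add]; simp
        have h5 : 0 < Real.exp x := Real.exp_pos x
        nlinarith [mul_le_mul_of_nonneg_left h3 h5.le]
      · have hmax : max x 0 = 0 := max_eq_right hx0'.le
        rw [hmax, Real.exp_zero, abs_of_neg hx0', mul_one]
        have hlb : 0 ≤ Real.exp x - 1 - x := by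
          have := Real.add_one_le_exp x; linarith
        have hub : Real.exp x ≤ 1 := by
          rw [← Real.exp_zero]; exact Real.exp_le_exp.mpr hx0'.le
        rw [abs_of_nonneg hlb]; linarith
    calc |x * (Real.exp x - 1 - x)| = |x| * |Real.exp x - 1 - x| := abs_mul _ _
      _ ≤ |x| * (2 * |x| * Real.exp (max x 0)) :=
          mul_le_mul_of_nonneg_left key (abs_nonneg x)
      _ = 2 * |x| ^ 2 * Real.exp (max x 0) := by ring
      _ ≤ 2 * |x| ^ (2 + ρ) * Real.exp (max x 0) := by
          exact mul_le_mul_of_nonneg_right (mul_le_mul_of_nonneg_left h2' (by norm_num)) (Real.exp_pos _).le
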